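/- arXiv:1912.02585 — 2 statements merged into one kernel-verified Lean document; each statement's English description precedes it below -/
import Mathlib

section
/- Let (l,k) be the most loaded link of a feasible schedule, and suppose there is a neighboring link (i,j) with p(i,j) ≥ 2 that can transfer one cell to (l,k) preserving feasibility. If x(l,k) > x(i,j)/(1 − 1/p(i,j)), then reassigning one cell from (i,j) to (l,k) yields a feasible schedule whose maximum per-link delay is at most that of the original; hence the original schedule was not strictly optimal. In particular, in every optimal schedule, x(l,k) ≤ x(i,j)/(1 − 1/p(i,j)) for every such neighboring link (i,j). -/
private lemma round_div_helper (n d : ℕ) :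
    round ((n : ℝ) / (d : ℝ) + 0.5) = ((n / d : ℕ) : ℤ) + 1 := by
  have h5 : (0.5 : ℝ) = 1 / 2 := by norm_num
  rw [round_eq, h5]
  have : (n : ℝ) / (d : ℝ) + 1 / 2 + 1 / 2 = (n : ℝ) / (d : ℝ) + 1 := by ring
  rw [this, Int.floor_add_one]
  congr 1
  rw [show ((n : ℝ)) = ((n : ℚ) : ℝ) by norm_num,
    show ((d : ℝ)) = ((d : ℚ) : ℝ) by norm_num, ← Rat.cast_div, Rat.floor_cast,
    Rat.floor_natCast_div_natCast]
  exact (Int.natCast_div n d).symm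

/-- If the most loaded link a could receive a cell from a neighboring link b with
    x(a) > x(b)/(1 - 1/p(b)), then the transfer does not increase the maximum delay,
    so the schedule is not strictly optimal; hence every strictly optimal schedule
    satisfies x(a) ≤ x(b)/(1 - 1/p(b)) for all such neighbors b. -/
theorem stmt_2 {E : Type} [Fintype E] [Nonempty E] [DecidableEq E]
    (q p : E → ℕ) (S : ℕ) (hS : 0 < S)
    (feasible : (E → ℕ) → Prop)
    (a b : E) (hab : a ≠ b) (hpb : 2 ≤ p b)
    (hp1 : ∀ e, 1 ≤ p e)
    (hfeas : feasible p)
    (hfeas' : feasible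
      (Function.update (Function.update p a (p a + 1)) b (p b - 1))) :
    let x : (E → ℕ) → E → ℤ :=
      fun pp e => if q e = 0 then 0 else round ((q e : ℝ) / (pp e : ℝ) + 0.5)
    let maxd : (E → ℕ) → ℤ :=
      fun pp => Finset.univ.sup' Finset.univ_nonempty (fun e => x pp e * (S : ℤ))
    let p' : E → ℕ := Function.update (Function.update p a (p a + 1)) b (p b - 1)
    let strictOpt : Prop :=
      ∀ p'' : E → ℕ, feasible p'' → p'' ≠ p → maxd p < maxd p''
    (∀ e, x p e ≤ x p a) →
    ((((x p b : ℝ) / (1 - 1 / (p b : ℝ)) < (x p a : ℝ)) →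
        maxd p' ≤ maxd p ∧ ¬ strictOpt) ∧
     (strictOpt → (x p a : ℝ) ≤ (x p b : ℝ) / (1 - 1 / (p b : ℝ)))) := by
  intro x maxd p' strictOpt hmax
  have hx : ∀ (pp : E → ℕ) (e : E),
      x pp e = if q e = 0 then 0 else ((q e / pp e : ℕ) : ℤ) + 1 := by
    intro pp e
    simp only [x]
    split
    · rfl
    · exact round_div_helper _ _
  have hp'a : p' a = p a + 1 := by
    simp [p', Function.update_of_ne hab, Function.update_self]
  have hp'b : p' b = p b - 1 := by simp [p']
  have hp'e : ∀ e, e ≠ a → e ≠ b → p' e = p e := by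
    intro e hea heb
    simp [p', Function.update_of_ne heb, Function.update_of_ne hea]
  have hpbpos : (0 : ℝ) < 1 - 1 / (p b : ℝ) := by
    have : (2 : ℝ) ≤ (p b : ℝ) := by exact_mod_cast hpb
    rw [sub_pos, div_lt_one (by linarith)]
    linarith
  -- Key: under the strict inequality, every new load is ≤ old max load
  have key : (x p b : ℝ) / (1 - 1 / (p b : ℝ)) < (x p a : ℝ) →
      ∀ e, x p' e ≤ x p a := by
    intro hlt e
    have hA0 : 0 ≤ x p a := by
      have := hmax b
      by_cases hqb : q b = 0
      · have : x p b = 0 := by simp [hx, hqb]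
        omega
      · have : 1 ≤ x p b := by
          rw [hx p b]; simp [hqb]; positivity
        omega
    by_cases hea : e = a
    · rw [hea, hx, hx, hp'a]
      by_cases hq : q a = 0
      · simp [hq]
      · simp only [hq, ite_false]
        have h : q a / (p a + 1) ≤ q a / p a :=
          Nat.div_le_div_left (Nat.le_succ _) (hp1 a)
        omega
    by_cases heb : e = b
    · rw [heb, hx, hp'b]
      by_cases hqb : q b = 0
      · simp [hqb]; exact hA0
      · -- main arithmetic case
        simp only [hqb, ite_false]
        set A : ℤ := x p a with hAdef
        have hxb : x p b = ((q b / p b : ℕ) : ℤ) + 1 := by rw [hx]; simp [hqb]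
        -- from hlt : (x p b) * (p b) < A * (p b - 1) over ℝ, hence ℤ
        have hltR : (x p b : ℝ) * (p b : ℝ) < (A : ℝ) * ((p b : ℝ) - 1) := by
          rw [div_lt_iff₀ hpbpos] at hlt
          have hpb0 : (0 : ℝ) < (p b : ℝ) := by positivity
          have := mul_lt_mul_of_pos_right hlt hpb0
          calc (x p b : ℝ) * (p b : ℝ) < (A : ℝ) * (1 - 1 / (p b : ℝ)) * (p b : ℝ) := this
            _ = (A : ℝ) * ((p b : ℝ) - 1) := by
                have hpb0 : (p b : ℝ) ≠ 0 := by positivity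
                field_simp
        have hltZ : (x p b) * (p b : ℤ) < A * ((p b : ℤ) - 1) := by exact_mod_cast hltR
        set X : ℕ := q b / p b + 1 with hXdef
        have hXZ : (X : ℤ) * (p b : ℤ) < A * ((p b : ℤ) - 1) := by
          rw [hxb] at hltZ; rw [hXdef]; push_cast; push_cast at hltZ; linarith
        -- q b < X * p b
        have hqlt : q b < X * p b := by
          have h1 := Nat.div_add_mod (q b) (p b)
          have h2 := Nat.mod_lt (q b) (show 0 < p b by omega)
          have h3 : X * p b = p b * (q b / p b) + p b := by
            simp only [hXdef]; ring
          omega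
        -- hence q b < A.toNat * (p b - 1)
        have hAX : (X : ℤ) * (p b : ℤ) ≤ (A.toNat : ℤ) * ((p b : ℤ) - 1) - 1 := by
          rw [Int.toNat_of_nonneg hA0]; omega
        have hAnat : X * p b ≤ A.toNat * (p b - 1) - 1 := by
          have h1 : ((p b : ℤ) - 1) = ((p b - 1 : ℕ) : ℤ) := by push_cast [Nat.cast_sub (by omega : 1 ≤ p b)]; ring
          rw [h1] at hAX
          have : (X * p b : ℤ) ≤ ((A.toNat * (p b - 1) : ℕ) : ℤ) - 1 := by push_cast; push_cast at hAX; linarith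
          omega
        have hdiv : q b / (p b - 1) < A.toNat := by
          rw [Nat.div_lt_iff_lt_mul (by omega : 0 < p b - 1)]
          omega
        have : ((q b / (p b - 1) : ℕ) : ℤ) + 1 ≤ (A.toNat : ℤ) := by exact_mod_cast hdiv
        rw [Int.toNat_of_nonneg hA0] at this
        exact this
    · rw [hx, hp'e e hea heb, ← hx]
      exact hmax e
  have hmaxle : ((x p b : ℝ) / (1 - 1 / (p b : ℝ)) < (x p a : ℝ)) → maxd p' ≤ maxd p := by
    intro hlt
    apply Finset.sup'_le
    intro e _
    calc x p' e * (S : ℤ) ≤ x p a * (S : ℤ) := by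
          have := key hlt e
          exact mul_le_mul_of_nonneg_right this (by positivity)
      _ ≤ maxd p := Finset.le_sup' (f := fun e => x p e * (S : ℤ)) (Finset.mem_univ a)
  have hpne : p' ≠ p := by
    intro h
    have := congrFun h b
    rw [hp'b] at this
    omega
  constructor
  · intro hlt
    refine ⟨hmaxle hlt, fun hopt => ?_⟩
    exact absurd (hmaxle hlt) (not_le.mpr (hopt p' hfeas' hpne))
  · intro hopt
    by_contra h
    push_neg at h
    exact absurd (hmaxle h) (not_le.mpr (hopt p' hfeas' hpne))
end

section
/- Termination of pairwise balancing: repeatedly applying the cell-transfer step (move one cell from the least loaded transferable neighbor to the most loaded link whenever the condition of Lemma 2 is violated) strictly decreases the lexicographically-ordered multiset of link loads, and therefore terminates in finitely many steps on any finite network with integer queues and allocations. -/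
private lemma three_pow_add_lt {m n k : ℕ} (hm : m < k) (hn : n < k) :
    3 ^ m + 3 ^ n < 3 ^ k := by
  have h1 : (3:ℕ) ^ m ≤ 3 ^ (k - 1) := Nat.pow_le_pow_right (by norm_num) (by omega)
  have h2 : (3:ℕ) ^ n ≤ 3 ^ (k - 1) := Nat.pow_le_pow_right (by norm_num) (by omega)
  have h3 : (3:ℕ) ^ k = 3 * 3 ^ (k - 1) := by
    rw [← pow_succ']
    congr 1
    omega
  have h4 : 0 < (3:ℕ) ^ (k - 1) := Nat.pow_pos (by norm_num)
  omega

/-- Rank of a rational `x`: number of possible load values strictly below `x`. -/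
private def rk {E : Type} [Fintype E] (q : E → ℕ) (B : ℕ) (x : ℚ) : ℕ :=
  (Finset.univ.filter (fun d : E × Fin B => (q d.1 : ℚ) / ((d.2 : ℕ) + 1) < x)).card

private lemma rk_lt {E : Type} [Fintype E] (q : E → ℕ) (B : ℕ) (e : E) (k : ℕ)
    (hk1 : 1 ≤ k) (hkB : k ≤ B) {x : ℚ} (h : (q e : ℚ) / (k : ℚ) < x) :
    rk q B ((q e : ℚ) / (k : ℚ)) < rk q B x := by
  have hkB' : k - 1 < B := by omega
  set d0 : E × Fin B := (e, ⟨k - 1, hkB'⟩) with hd0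
  have hval : ((q d0.1 : ℚ)) / (((d0.2 : ℕ) : ℚ) + 1) = (q e : ℚ) / (k : ℚ) := by
    have : (((k - 1 : ℕ)) : ℚ) = (k : ℚ) - 1 := by
      rw [Nat.cast_sub hk1]; norm_num
    simp only [hd0]
    rw [this]
    ring_nf
  apply Finset.card_lt_card
  constructor
  · intro d hd
    simp only [Finset.mem_filter, Finset.mem_univ, true_and] at hd ⊢
    exact hd.trans h
  · intro hcon
    have hmem : d0 ∈ Finset.univ.filter
        (fun d : E × Fin B => (q d.1 : ℚ) / ((d.2 : ℕ) + 1) < x) := by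
      simp only [Finset.mem_filter, Finset.mem_univ, true_and]
      rw [hval]; exact h
    have := hcon hmem
    simp only [Finset.mem_filter, Finset.mem_univ, true_and] at this
    rw [hval] at this
    exact lt_irrefl _ this

/-- Pairwise load-balancing terminates: with bounded integer allocations there is
    no infinite sequence of single-cell transfer steps, each of which moves a cell
    from a less loaded link b to a more loaded link a. -/
theorem stmt_17 {E : Type} [Fintype E] [DecidableEq E] (q : E → ℕ) (B : ℕ) :
    let step : (E → ℕ) → (E → ℕ) → Prop := fun p p' =>
      ∃ a b, a ≠ b ∧ 1 ≤ p a ∧ 2 ≤ p b ∧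
        (q b : ℚ) / ((p b : ℚ) - 1) < (q a : ℚ) / (p a : ℚ) ∧
        p' = Function.update (Function.update p a (p a + 1)) b (p b - 1)
    ¬ ∃ f : ℕ → (E → ℕ), (∀ n e, f n e ≤ B) ∧ ∀ n, step (f n) (f (n + 1)) := by
  intro step
  rintro ⟨f, hBnd, hstep⟩
  set Φ : ℕ → ℕ := fun n => ∑ e, 3 ^ rk q B ((q e : ℚ) / (f n e : ℚ)) with hΦ
  have hdec : ∀ n, Φ (n + 1) < Φ n := by
    intro n
    obtain ⟨a, b, hab, h1, h2, hlt, hupd⟩ := hstep n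
    set p : E → ℕ := f n with hp
    -- values of f (n+1)
    have hfa : f (n + 1) a = p a + 1 := by
      rw [hupd, Function.update_of_ne hab, Function.update_self]
    have hfb : f (n + 1) b = p b - 1 := by
      rw [hupd, Function.update_self]
    have hfe : ∀ e, e ≠ a → e ≠ b → f (n + 1) e = p e := by
      intro e hea heb
      rw [hupd, Function.update_of_ne heb, Function.update_of_ne hea]
    -- bounds
    have hpa1B : p a + 1 ≤ B := by
      have := hBnd (n + 1) a; rwa [hfa] at this
    have hpb1B : p b - 1 ≤ B := by
      have := hBnd n b
      simp only [hp]
      omega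
    -- positivity facts
    have hpaQ : (0 : ℚ) < (p a : ℚ) := by exact_mod_cast h1
    have hpb1Q : (0 : ℚ) < (p b : ℚ) - 1 := by
      have : (2 : ℚ) ≤ (p b : ℚ) := by exact_mod_cast h2
      linarith
    have hxapos : (0 : ℚ) < (q a : ℚ) / (p a : ℚ) := by
      refine lt_of_le_of_lt ?_ hlt
      positivity
    have hqa : (0 : ℚ) < (q a : ℚ) := by
      by_contra hc
      push_neg at hc
      have : (q a : ℚ) = 0 := le_antisymm hc (by positivity)
      rw [this, zero_div] at hxapos
      exact lt_irrefl _ hxapos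
    -- rank inequalities
    have hA : rk q B ((q a : ℚ) / ((p a + 1 : ℕ) : ℚ)) < rk q B ((q a : ℚ) / (p a : ℚ)) := by
      apply rk_lt q B a (p a + 1) (by omega) hpa1B
      push_cast
      exact div_lt_div_of_pos_left hqa hpaQ (by linarith)
    have hB' : rk q B ((q b : ℚ) / ((p b - 1 : ℕ) : ℚ)) < rk q B ((q a : ℚ) / (p a : ℚ)) := by
      apply rk_lt q B b (p b - 1) (by omega) hpb1B
      have hcast : (((p b - 1 : ℕ)) : ℚ) = (p b : ℚ) - 1 := by
        rw [Nat.cast_sub (by omega)]; norm_num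
      rw [hcast]
      exact hlt
    -- decompose sums over a, b and the rest
    have hsum : ∀ g : E → ℕ, (∑ e, (3:ℕ) ^ rk q B ((q e : ℚ) / (g e : ℚ)))
        = 3 ^ rk q B ((q a : ℚ) / (g a : ℚ)) + 3 ^ rk q B ((q b : ℚ) / (g b : ℚ))
          + ∑ e ∈ (Finset.univ.erase a).erase b, 3 ^ rk q B ((q e : ℚ) / (g e : ℚ)) := by
      intro g
      rw [← Finset.add_sum_erase _ _ (Finset.mem_univ a),
        ← Finset.add_sum_erase _ _ (Finset.mem_erase.mpr ⟨hab.symm, Finset.mem_univ b⟩),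
        add_assoc]
    have hrest : ∑ e ∈ (Finset.univ.erase a).erase b,
          (3:ℕ) ^ rk q B ((q e : ℚ) / (f (n+1) e : ℚ))
        = ∑ e ∈ (Finset.univ.erase a).erase b, 3 ^ rk q B ((q e : ℚ) / (p e : ℚ)) := by
      apply Finset.sum_congr rfl
      intro e he
      simp only [Finset.mem_erase] at he
      rw [hfe e he.2.1 he.1]
    have hfront : (3:ℕ) ^ rk q B ((q a : ℚ) / ((p a + 1 : ℕ) : ℚ))
          + 3 ^ rk q B ((q b : ℚ) / ((p b - 1 : ℕ) : ℚ))
        < 3 ^ rk q B ((q a : ℚ) / (p a : ℚ)) + 3 ^ rk q B ((q b : ℚ) / (p b : ℚ)) := by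
      calc _ < (3:ℕ) ^ rk q B ((q a : ℚ) / (p a : ℚ)) := three_pow_add_lt hA hB'
        _ ≤ _ := Nat.le_add_right _ _
    have e1 := hsum (f (n + 1))
    have e2 := hsum p
    rw [hfa, hfb] at e1
    simp only [hΦ]
    rw [e1, e2, hrest]
    omega
  -- strictly decreasing ℕ-sequence: contradiction
  have key : ∀ n, Φ n + n ≤ Φ 0 := by
    intro n
    induction n with
    | zero => omega
    | succ m ih =>
      have := hdec m
      omega
  have := key (Φ 0 + 1)
  omega
end
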